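/- Let σ be a permutation of a finite set X that is a product of b disjoint cycles of lengths i_1, ..., i_b with p ∤ i_b for a prime p. In the F_p-vector space F_p[X]/span(Σ_{x∈X} e_x), the elements v_j = Σ_{x in cycle j} e_x for j = 1, ..., b−1 form a basis of the σ-fixed subspace. -/

import Mathlib

/-- The quotient representation on `M ⧸ S` for an invariant submodule `S`. -/
noncomputable def Representation.quot {k G M : Type} [CommRing k] [Group G] [AddCommGroup M]
    [Module k M] (ρ : Representation k G M) (S : Submodule k M)
    (hS : ∀ g : G, ∀ x ∈ S, ρ g x ∈ S) : Representation k G (M ⧸ S) where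
  toFun g := S.mapQ S (ρ g) fun x hx => hS g x hx
  map_one' := Submodule.linearMap_qext _ (by ext x; simp)
  map_mul' g h := Submodule.linearMap_qext _ (by ext x; simp [Submodule.mapQ_apply])

section PermModule

variable (p : ℕ) (X : Type) [Fintype X]

/-- The permutation representation of `Perm X` on `F_p[X]`. -/
noncomputable def permRep' : Representation (ZMod p) (Equiv.Perm X) (X →₀ ZMod p) where
  toFun g := Finsupp.lmapDomain (ZMod p) (ZMod p) (g • ·)
  map_one' := by ext; simp
  map_mul' x y := by ext; simp [mul_smul, Finsupp.mapDomain_comp]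

/-- The sum of all basis vectors `Σ_{x ∈ X} e_x`. -/
noncomputable def allOnes' : X →₀ ZMod p := ∑ x, Finsupp.single x 1

/-- The line spanned by the sum of all basis vectors. -/
noncomputable def allOnesLine' : Submodule (ZMod p) (X →₀ ZMod p) :=
  Submodule.span (ZMod p) {allOnes' p X}

lemma permRep'_allOnes (σ : Equiv.Perm X) :
    permRep' p X σ (allOnes' p X) = allOnes' p X := by
  unfold permRep' allOnes'
  rw [map_sum]
  refine Fintype.sum_equiv σ _ _ fun i => ?_
  show Finsupp.mapDomain (σ • ·) (Finsupp.single i 1) = _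
  rw [Finsupp.mapDomain_single]
  rfl

lemma allOnesLine'_invariant (σ : Equiv.Perm X) :
    ∀ v ∈ allOnesLine' p X, permRep' p X σ v ∈ allOnesLine' p X := by
  intro v hv
  obtain ⟨c, rfl⟩ := Submodule.mem_span_singleton.1 hv
  rw [map_smul, permRep'_allOnes]
  exact Submodule.smul_mem _ _ (Submodule.mem_span_singleton_self _)

/-- `V = F_p[X] / span(Σ_x e_x)` as a representation of `Perm X`. -/
noncomputable def stdQuotRep' :
    Representation (ZMod p) (Equiv.Perm X) ((X →₀ ZMod p) ⧸ allOnesLine' p X) :=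
  (permRep' p X).quot (allOnesLine' p X) (allOnesLine'_invariant p X)

end PermModule

set_option linter.unusedSectionVars false
namespace S13
open MulAction
open scoped Classical

variable (p : ℕ) {X : Type} [Fintype X] (σ : Equiv.Perm X)

/-- orbit sum -/
noncomputable def w (q : orbitRel.Quotient (Subgroup.zpowers σ) X) : X →₀ ZMod p :=
  ∑ x ∈ q.orbit.toFinset, Finsupp.single x 1

lemma finsum_eq_w (q : orbitRel.Quotient (Subgroup.zpowers σ) X) :
    (∑ᶠ x ∈ q.orbit, Finsupp.single x (1 : ZMod p)) = w p σ q := by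
  rw [w, ← Set.coe_toFinset q.orbit, finsum_mem_coe_finset]
  simp

lemma w_apply (q : orbitRel.Quotient (Subgroup.zpowers σ) X) (x : X) :
    w p σ q x = if x ∈ q.orbit then 1 else 0 := by
  simp [w, Finsupp.finset_sum_apply, Finsupp.single_apply, Set.mem_toFinset]

lemma mk_apply_eq (τ : Equiv.Perm X) (hτ : τ ∈ Subgroup.zpowers σ) (x : X) :
    (Quotient.mk'' (τ x) : orbitRel.Quotient (Subgroup.zpowers σ) X) = Quotient.mk'' x :=
  Quotient.sound' ⟨⟨τ, hτ⟩, rfl⟩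

lemma apply_mem_orbit_iff (τ : Equiv.Perm X) (hτ : τ ∈ Subgroup.zpowers σ)
    (q : orbitRel.Quotient (Subgroup.zpowers σ) X) (x : X) :
    τ x ∈ q.orbit ↔ x ∈ q.orbit := by
  rw [orbitRel.Quotient.mem_orbit, orbitRel.Quotient.mem_orbit, mk_apply_eq σ τ hτ]

lemma permRep'_apply' (f : X →₀ ZMod p) (x : X) :
    permRep' p X σ f x = f (σ⁻¹ • x) := by
  show Finsupp.mapDomain (σ • ·) f x = _
  conv_lhs => rw [show x = σ • (σ⁻¹ • x) by simp]
  exact Finsupp.mapDomain_apply (MulAction.injective σ) f _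

/-- the coefficient-sum-over-an-orbit functional -/
noncomputable def φ (q : orbitRel.Quotient (Subgroup.zpowers σ) X) :
    (X →₀ ZMod p) →ₗ[ZMod p] ZMod p :=
  ∑ x ∈ q.orbit.toFinset, Finsupp.lapply x

lemma φ_apply (q : orbitRel.Quotient (Subgroup.zpowers σ) X) (f : X →₀ ZMod p) :
    φ p σ q f = ∑ x ∈ q.orbit.toFinset, f x := by
  simp [φ]

lemma φ_w_self (q : orbitRel.Quotient (Subgroup.zpowers σ) X) :
    φ p σ q (w p σ q) = (q.orbit.toFinset.card : ZMod p) := by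
  rw [φ_apply]
  rw [Finset.sum_congr rfl fun x hx => ?_, Finset.sum_const, nsmul_eq_mul, mul_one]
  rw [w_apply, if_pos (Set.mem_toFinset.1 hx)]

lemma φ_w_ne (q q' : orbitRel.Quotient (Subgroup.zpowers σ) X) (h : q' ≠ q) :
    φ p σ q (w p σ q') = 0 := by
  rw [φ_apply]
  refine Finset.sum_eq_zero fun x hx => ?_
  rw [w_apply, if_neg]
  intro hx'
  exact h (by
    rw [← orbitRel.Quotient.mem_orbit.1 hx', orbitRel.Quotient.mem_orbit.1 (Set.mem_toFinset.1 hx)])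

lemma φ_perm (q : orbitRel.Quotient (Subgroup.zpowers σ) X) (f : X →₀ ZMod p) :
    φ p σ q (permRep' p X σ f) = φ p σ q f := by
  rw [φ_apply, φ_apply]
  refine Finset.sum_equiv σ.symm (fun x => ?_) (fun x hx => ?_)
  · simp only [Set.mem_toFinset]
    exact (apply_mem_orbit_iff σ σ⁻¹ (Subgroup.inv_mem _ (Subgroup.mem_zpowers σ)) q x).symm
  · rw [permRep'_apply']
    rfl

lemma permRep_w (q : orbitRel.Quotient (Subgroup.zpowers σ) X) :
    permRep' p X σ (w p σ q) = w p σ q := by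
  ext x
  rw [permRep'_apply', w_apply, w_apply]
  have : σ⁻¹ • x = σ⁻¹ x := rfl
  rw [this, apply_mem_orbit_iff σ σ⁻¹ (Subgroup.inv_mem _ (Subgroup.mem_zpowers σ)) q x]

lemma out_mem_orbit (q : orbitRel.Quotient (Subgroup.zpowers σ) X) :
    Quotient.out q ∈ q.orbit := by
  rw [orbitRel.Quotient.mem_orbit]; exact Quotient.out_eq' q

lemma card_orbit_eq (q : orbitRel.Quotient (Subgroup.zpowers σ) X) :
    q.orbit.toFinset.card = Nat.card q.orbit := by
  simp [Nat.card_eq_fintype_card, Set.toFinset_card]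

noncomputable instance : Fintype (orbitRel.Quotient (Subgroup.zpowers σ) X) :=
  Fintype.ofFinite _

lemma sum_partition {M : Type} [AddCommMonoid M] (g : X → M) :
    ∑ x : X, g x
      = ∑ q : orbitRel.Quotient (Subgroup.zpowers σ) X, ∑ x ∈ q.orbit.toFinset, g x := by
  rw [← Finset.sum_fiberwise Finset.univ
    (fun x => (Quotient.mk'' x : orbitRel.Quotient (Subgroup.zpowers σ) X)) g]
  refine Finset.sum_congr rfl fun q _ => Finset.sum_congr ?_ fun _ _ => rfl
  ext x
  simp [orbitRel.Quotient.mem_orbit]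

lemma allOnes_eq :
    allOnes' p X = ∑ q : orbitRel.Quotient (Subgroup.zpowers σ) X, w p σ q := by
  rw [allOnes', sum_partition σ (fun x => Finsupp.single x (1 : ZMod p))]
  rfl

lemma apply_eq_of_fixed (f : X →₀ ZMod p) (hf : permRep' p X σ f = f)
    (τ : Equiv.Perm X) (hτ : τ ∈ Subgroup.zpowers σ) (x : X) : f (τ x) = f x := by
  have key : ∀ y : X, f (σ⁻¹ y) = f y := by
    intro y
    conv_rhs => rw [← hf]
    rw [permRep'_apply']
    rfl
  have key2 : ∀ y : X, f (σ y) = f y := by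
    intro y
    have := key (σ y)
    simpa using this.symm
  have main : ∀ n : ℤ, f ((σ ^ n) x) = f x := by
    intro n
    induction n using Int.induction_on with
    | zero => simp
    | succ k ih =>
      rw [show ((k : ℤ) + 1) = 1 + k by ring, zpow_add, zpow_one, Equiv.Perm.mul_apply, key2, ih]
    | pred k ih =>
      rw [show (-(k : ℤ) - 1) = (-1) + (-k) by ring, zpow_add, zpow_neg_one,
        Equiv.Perm.mul_apply, key, ih]
  obtain ⟨n, rfl⟩ := Subgroup.mem_zpowers_iff.1 hτ
  exact main n

lemma apply_eq_out (f : X →₀ ZMod p) (hf : permRep' p X σ f = f)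
    (q : orbitRel.Quotient (Subgroup.zpowers σ) X) (x : X) (hx : x ∈ q.orbit) :
    f x = f (Quotient.out q) := by
  rw [orbitRel.Quotient.orbit_eq_orbit_out q Quotient.out_eq'] at hx
  obtain ⟨⟨τ, hτ⟩, rfl⟩ := hx
  exact apply_eq_of_fixed p σ f hf τ hτ _

lemma fixed_decomp (f : X →₀ ZMod p) (hf : permRep' p X σ f = f) :
    f = ∑ q : orbitRel.Quotient (Subgroup.zpowers σ) X,
      f (Quotient.out q) • w p σ q := by
  have h1 : f = ∑ x : X, Finsupp.single x (f x) := by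
    ext a
    simp [Finsupp.finset_sum_apply, Finsupp.single_apply]
  conv_lhs => rw [h1, sum_partition σ (fun x => Finsupp.single x (f x))]
  refine Finset.sum_congr rfl fun q _ => ?_
  rw [w, Finset.smul_sum]
  refine Finset.sum_congr rfl fun x hx => ?_
  rw [Finsupp.smul_single, smul_eq_mul, mul_one,
    apply_eq_out p σ f hf q x (Set.mem_toFinset.1 hx)]

end S13
set_option maxHeartbeats 2000000 in
/-- Let `σ` be a permutation of a finite set `X` that is a product of `b`
disjoint cycles (enumerated by `e : Fin b ≃ {orbits of σ}`), whose last cycle has length not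
divisible by the prime `p`.  In `V = F_p[X]/span(Σ_x e_x)`, the images `v_j` of the sums of
basis vectors over the `j`-th cycle, `j = 1, …, b−1`, form a basis of the `σ`-fixed
subspace. -/
theorem statement13 (p : ℕ) (hp : p.Prime) (X : Type) [Fintype X]
    (σ : Equiv.Perm X) (b : ℕ) (hb : 0 < b)
    (e : Fin b ≃ MulAction.orbitRel.Quotient (Subgroup.zpowers σ) X)
    (hlast : ¬ p ∣ Nat.card (MulAction.orbitRel.Quotient.orbit (e ⟨b - 1, by omega⟩)))
    (v : Fin (b - 1) → (X →₀ ZMod p) ⧸ allOnesLine' p X)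
    (hv : ∀ j : Fin (b - 1), v j = Submodule.Quotient.mk
      (∑ᶠ x ∈ MulAction.orbitRel.Quotient.orbit (e (Fin.castLE (Nat.sub_le b 1) j)),
        Finsupp.single x (1 : ZMod p))) :
    LinearIndependent (ZMod p) v ∧
      Submodule.span (ZMod p) (Set.range v)
        = LinearMap.ker (stdQuotRep' p X σ - LinearMap.id) := by
  classical
  haveI := Fact.mk hp
  obtain ⟨m, rfl⟩ : ∃ m, b = m + 1 := ⟨b - 1, by omega⟩
  set ilast : Fin (m + 1) := ⟨m, by omega⟩ with hilast
  have hlast' : ¬ p ∣ Nat.card ((e ilast).orbit : Set X) := hlast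
  have hcard : ((Nat.card ((e ilast).orbit : Set X) : ZMod p)) ≠ 0 := by
    rw [Ne, ZMod.natCast_eq_zero_iff]
    exact hlast'
  have hv' : ∀ j : Fin m, v j
      = Submodule.Quotient.mk (S13.w p σ (e (Fin.castLE (by omega) j))) := by
    intro j
    rw [hv j, S13.finsum_eq_w]
  have hcast_ne : ∀ j : Fin m, e (Fin.castLE (by omega : m ≤ m + 1) j) ≠ e ilast := by
    intro j h
    have := e.injective h
    have : (j : ℕ) = m := congrArg Fin.val this
    omega
  -- φ at the last orbit kills the w's of the other orbits
  have hφw : ∀ j : Fin m,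
      S13.φ p σ (e ilast) (S13.w p σ (e (Fin.castLE (by omega) j))) = 0 := fun j =>
    S13.φ_w_ne p σ _ _ (hcast_ne j)
  have hφall : S13.φ p σ (e ilast) (allOnes' p X)
      = (Nat.card ((e ilast).orbit : Set X) : ZMod p) := by
    rw [S13.allOnes_eq p σ, map_sum, Finset.sum_eq_single (e ilast)]
    · rw [S13.φ_w_self, S13.card_orbit_eq]
    · intro q _ hq
      exact S13.φ_w_ne p σ _ _ hq
    · intro h
      exact absurd (Finset.mem_univ _) h
  -- a membership in the line gives zero coefficient
  have hline0 : ∀ f : X →₀ ZMod p, f ∈ allOnesLine' p X →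
      S13.φ p σ (e ilast) f = 0 → f = 0 := by
    intro f hf hφf
    obtain ⟨c, rfl⟩ := Submodule.mem_span_singleton.1 hf
    rw [map_smul, hφall, smul_eq_mul] at hφf
    rcases mul_eq_zero.1 hφf with h | h
    · rw [h, zero_smul]
    · exact absurd h hcard
  -- fixed in quotient implies genuinely fixed
  have key0 : ∀ f : X →₀ ZMod p, permRep' p X σ f - f ∈ allOnesLine' p X →
      permRep' p X σ f = f := by
    intro f hf
    have h0 : S13.φ p σ (e ilast) (permRep' p X σ f - f) = 0 := by
      rw [map_sub, S13.φ_perm, sub_self]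
    have := hline0 _ hf h0
    rwa [sub_eq_zero] at this
  -- action on quotient of a mk
  have hmk : ∀ f : X →₀ ZMod p, stdQuotRep' p X σ (Submodule.Quotient.mk f)
      = Submodule.Quotient.mk (permRep' p X σ f) := fun f => rfl
  -- linear independence argument in F_p[X]
  have key1 : ∀ g : Fin m → ZMod p,
      (∑ j : Fin m, g j • S13.w p σ (e (Fin.castLE (by omega) j))) ∈ allOnesLine' p X →
      ∀ j, g j = 0 := by
    intro g hg j0
    have h0 : S13.φ p σ (e ilast)
        (∑ j : Fin m, g j • S13.w p σ (e (Fin.castLE (by omega) j))) = 0 := by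
      rw [map_sum]
      refine Finset.sum_eq_zero fun j _ => ?_
      rw [map_smul, hφw j, smul_zero]
    have hz := hline0 _ hg h0
    -- evaluate at a point of the orbit of j0
    set x0 : X := Quotient.out (e (Fin.castLE (by omega : m ≤ m + 1) j0)) with hx0
    have hx0mem : x0 ∈ (e (Fin.castLE (by omega : m ≤ m + 1) j0)).orbit :=
      S13.out_mem_orbit σ _
    have := congrArg (fun f : X →₀ ZMod p => f x0) hz
    simp only [Finsupp.finset_sum_apply, Finsupp.coe_zero, Pi.zero_apply,
      Finsupp.smul_apply] at this
    rw [Finset.sum_eq_single j0] at this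
    · rw [S13.w_apply, if_pos hx0mem, smul_eq_mul, mul_one] at this
      exact this
    · intro j _ hj
      rw [S13.w_apply, if_neg, smul_zero]
      intro hmem
      have : e (Fin.castLE (by omega : m ≤ m + 1) j)
          = e (Fin.castLE (by omega : m ≤ m + 1) j0) := by
        rw [← MulAction.orbitRel.Quotient.mem_orbit.1 hmem,
          MulAction.orbitRel.Quotient.mem_orbit.1 hx0mem]
      have := e.injective this
      exact hj (by
        have h := congrArg Fin.val this
        exact Fin.ext h)
    · intro h
      exact absurd (Finset.mem_univ _) h
  constructor
  · -- linear independence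
    rw [Fintype.linearIndependent_iff]
    intro g hg
    apply key1 g
    rw [← Submodule.Quotient.mk_eq_zero, ← hg, ← Submodule.mkQ_apply, map_sum]
    refine Finset.sum_congr rfl fun j _ => ?_
    rw [map_smul, Submodule.mkQ_apply, ← hv' j]
  · -- span equality
    apply le_antisymm
    · rw [Submodule.span_le]
      rintro _ ⟨j, rfl⟩
      rw [SetLike.mem_coe, LinearMap.mem_ker, LinearMap.sub_apply, LinearMap.id_apply,
        hv' j, hmk, S13.permRep_w, sub_self]
    · intro y hy
      obtain ⟨f, rfl⟩ := Submodule.Quotient.mk_surjective _ y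
      rw [LinearMap.mem_ker, LinearMap.sub_apply, LinearMap.id_apply, hmk,
        ← Submodule.Quotient.mk_sub, Submodule.Quotient.mk_eq_zero] at hy
      have hfix := key0 f hy
      have hdec := S13.fixed_decomp p σ f hfix
      have hspan : ∀ j : Fin m,
          (Submodule.Quotient.mk (S13.w p σ (e (Fin.castLE (by omega) j)))
            : (X →₀ ZMod p) ⧸ allOnesLine' p X)
            ∈ Submodule.span (ZMod p) (Set.range v) := by
        intro j
        rw [← hv' j]
        exact Submodule.subset_span ⟨j, rfl⟩
      have hsum0 : (∑ i : Fin (m + 1),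
          (Submodule.Quotient.mk (S13.w p σ (e i))
            : (X →₀ ZMod p) ⧸ allOnesLine' p X)) = 0 := by
        have h1 : (∑ i : Fin (m + 1),
            (Submodule.Quotient.mk (S13.w p σ (e i))
              : (X →₀ ZMod p) ⧸ allOnesLine' p X))
            = Submodule.Quotient.mk (∑ i : Fin (m + 1), S13.w p σ (e i)) :=
          (map_sum (Submodule.mkQ (allOnesLine' p X)) _ _).symm
        have h2 : ∑ i : Fin (m + 1), S13.w p σ (e i) = allOnes' p X := by
          rw [S13.allOnes_eq p σ]
          exact Fintype.sum_equiv e _ _ (fun i => rfl)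
        rw [h1, h2, Submodule.Quotient.mk_eq_zero]
        exact Submodule.mem_span_singleton_self _
      have hlastmem : (Submodule.Quotient.mk (S13.w p σ (e ilast))
          : (X →₀ ZMod p) ⧸ allOnesLine' p X) ∈ Submodule.span (ZMod p) (Set.range v) := by
        rw [Fin.sum_univ_castSucc] at hsum0
        have h2 := eq_neg_of_add_eq_zero_right hsum0
        have h3 : ilast = Fin.last m := rfl
        rw [h3, h2]
        refine Submodule.neg_mem _ (Submodule.sum_mem _ fun j _ => ?_)
        have h4 : (j.castSucc : Fin (m + 1)) = Fin.castLE (by omega) j := rfl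
        rw [h4]
        exact hspan j
      have hmkf : (Submodule.Quotient.mk f : (X →₀ ZMod p) ⧸ allOnesLine' p X)
          = ∑ q : MulAction.orbitRel.Quotient (Subgroup.zpowers σ) X,
            f (Quotient.out q) • (Submodule.Quotient.mk (S13.w p σ q)
              : (X →₀ ZMod p) ⧸ allOnesLine' p X) := by
        conv_lhs => rw [hdec]
        rw [← Submodule.mkQ_apply, map_sum]
        exact Finset.sum_congr rfl fun q _ => by rw [map_smul, Submodule.mkQ_apply]
      rw [hmkf]
      refine Submodule.sum_mem _ fun q _ => Submodule.smul_mem _ _ ?_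
      obtain ⟨i, rfl⟩ := e.surjective q
      by_cases hi : (i : ℕ) = m
      · have h5 : i = ilast := Fin.ext hi
        rw [h5]
        exact hlastmem
      · have hi' : (i : ℕ) < m := by omega
        have h6 : i = Fin.castLE (by omega : m ≤ m + 1) (⟨(i : ℕ), hi'⟩ : Fin m) :=
          Fin.ext rfl
        rw [h6]
        exact hspan _
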